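/- There exist a constant K > 0 and N ∈ ℕ such that for all n ≥ N and all pairs (z,c) ∈ Ω_n^θ (i.e. z,c ∈ ℕ with z ≤ n^{1/3} θ_n² r and c ≤ n^{2/3} θ_n T r), one has |μ_θ(n,z,c) − z| ≤ K θ_n³ and σ²_θ(n,z,c) ≤ K θ_n² n^{1/3}. (Auxiliary bounds from the proof of Lemma 6.1.) -/
import Mathlib

lemma aux_pow_le (p : ℝ) (h0 : 0 ≤ p) (h1 : p ≤ 1) :
    ∀ z : ℕ, (1 - p) ^ z ≤ 1 - (z : ℝ) * p + ((z : ℝ) * p) ^ 2 / 2 := by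
  intro z
  induction z with
  | zero => norm_num
  | succ z ih =>
      have h2 : (1 - p) ^ (z + 1) = (1 - p) * (1 - p) ^ z := by ring
      have h3 : (1 - p) * (1 - p) ^ z ≤ (1 - p) * (1 - (z : ℝ) * p + ((z : ℝ) * p) ^ 2 / 2) :=
        mul_le_mul_of_nonneg_left ih (by linarith)
      have hz0 : (0 : ℝ) ≤ (z : ℝ) := Nat.cast_nonneg z
      push_cast
      nlinarith [sq_nonneg p, mul_nonneg (mul_nonneg (mul_nonneg hz0 hz0) h0)
        (mul_nonneg h0 h0), sq_nonneg ((z:ℝ)*p),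
        mul_nonneg (mul_nonneg hz0 hz0) (mul_nonneg (mul_nonneg h0 h0) h0)]

set_option maxHeartbeats 1000000 in
/-- Auxiliary bounds from the proof of Lemma 6.1. Let `θ n > 0`, `θ n → ∞`,
`θ n = o(n^(1/3))`. With `p n = n⁻¹ + λ θ n * n^(-4/3)`, `q n z = 1 - (1 - p n)^z`,
mean `μ n z c = (n - c) * q n z` and variance
`σ² n z c = (n - c) * q n z * (1 - q n z)` of `Bin(n - c, q n z)`, there exist `K > 0`
and `N` such that for all `n ≥ N` and all `(z, c) ∈ Ω_n^θ` (i.e. `z ≤ n^(1/3) θ_n² r`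
and `c ≤ n^(2/3) θ_n T r`), `|μ(n,z,c) - z| ≤ K θ_n³` and `σ²(n,z,c) ≤ K θ_n² n^(1/3)`. -/
theorem stmt_7 (lam r T : ℝ) (hr : 0 < r) (hT : 0 < T)
    (θ : ℕ → ℝ) (hθpos : ∀ n, 0 < θ n)
    (hθ_top : Filter.Tendsto θ Filter.atTop Filter.atTop)
    (hθ_small : Filter.Tendsto (fun n : ℕ => θ n * (n : ℝ) ^ (-(1 : ℝ) / 3))
      Filter.atTop (nhds 0))
    (p : ℕ → ℝ) (hp : ∀ n : ℕ, p n = (n : ℝ)⁻¹ + lam * θ n * (n : ℝ) ^ (-(4 : ℝ) / 3))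
    (q : ℕ → ℕ → ℝ) (hq : ∀ (n : ℕ) (z : ℕ), q n z = 1 - (1 - p n) ^ z)
    (μ : ℕ → ℕ → ℕ → ℝ)
    (hμ : ∀ (n : ℕ) (z c : ℕ), μ n z c = ((n : ℝ) - (c : ℝ)) * q n z)
    (σsq : ℕ → ℕ → ℕ → ℝ)
    (hσ : ∀ (n : ℕ) (z c : ℕ), σsq n z c = ((n : ℝ) - (c : ℝ)) * q n z * (1 - q n z)) :
    ∃ K : ℝ, 0 < K ∧ ∃ N : ℕ, ∀ n : ℕ, N ≤ n → ∀ z c : ℕ,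
      (z : ℝ) ≤ (n : ℝ) ^ ((1 : ℝ) / 3) * (θ n) ^ 2 * r →
      (c : ℝ) ≤ (n : ℝ) ^ ((2 : ℝ) / 3) * θ n * T * r →
      |μ n z c - (z : ℝ)| ≤ K * (θ n) ^ 3 ∧
        σsq n z c ≤ K * (θ n) ^ 2 * (n : ℝ) ^ ((1 : ℝ) / 3) := by
  set ε : ℝ := min 1 (1 / (2 * (|lam| + 1))) with hεdef
  have habs : (0:ℝ) ≤ |lam| := abs_nonneg lam
  have hε : 0 < ε := lt_min one_pos (by positivity)
  have hε1 : ε ≤ 1 := min_le_left _ _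
  have hε2 : ε ≤ 1 / (2 * (|lam| + 1)) := min_le_right _ _
  have hlamε : |lam| * ε ≤ 1 / 2 := by
    have h1 : |lam| * ε ≤ |lam| * (1 / (2 * (|lam| + 1))) :=
      mul_le_mul_of_nonneg_left hε2 habs
    have h2 : |lam| * (1 / (2 * (|lam| + 1))) ≤ 1 / 2 := by
      rw [mul_one_div, div_le_div_iff₀ (by positivity) two_pos]
      nlinarith
    linarith
  have hev : ∀ᶠ n in Filter.atTop, θ n * (n : ℝ) ^ (-(1 : ℝ) / 3) ≤ ε :=
    hθ_small.eventually (eventually_le_nhds hε)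
  obtain ⟨N₀, hN₀⟩ := Filter.eventually_atTop.mp hev
  refine ⟨|lam| * r + 2 * r ^ 2 + 2 * T * r ^ 2 + r + 1, by positivity, max N₀ 2, ?_⟩
  intro n hn z c hz hc
  set K : ℝ := |lam| * r + 2 * r ^ 2 + 2 * T * r ^ 2 + r + 1 with hK
  set x : ℝ := (n : ℝ) with hxdef
  set t : ℝ := θ n with htdef
  have ht : 0 < t := hθpos n
  have hn2 : (2 : ℝ) ≤ x := by
    have h2n : (2 : ℕ) ≤ n := le_trans (le_max_right _ _) hn
    rw [hxdef]
    exact_mod_cast h2n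
  have hx : (0 : ℝ) < x := by linarith
  set a : ℝ := x ^ ((1 : ℝ) / 3) with hadef
  have ha : 0 < a := Real.rpow_pos_of_pos hx _
  set u : ℝ := a⁻¹ with hudef
  have hu : 0 < u := inv_pos.mpr ha
  have hau : a * u = 1 := mul_inv_cancel₀ (ne_of_gt ha)
  have ha3 : a ^ 3 = x := by
    rw [hadef, ← Real.rpow_natCast (x ^ ((1:ℝ)/3)) 3, ← Real.rpow_mul hx.le]
    norm_num
  have ha2 : x ^ ((2 : ℝ) / 3) = a ^ 2 := by
    rw [hadef, ← Real.rpow_natCast (x ^ ((1:ℝ)/3)) 2, ← Real.rpow_mul hx.le]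
    norm_num
  have hneg1 : x ^ (-(1 : ℝ) / 3) = u := by
    rw [hudef, hadef, ← Real.rpow_neg_one (x ^ ((1:ℝ)/3)), ← Real.rpow_mul hx.le]
    norm_num
  have hu3 : u ^ 3 = x⁻¹ := by
    rw [hudef, ← ha3]; rw [inv_pow]
  have ha4 : x ^ ((4 : ℝ) / 3) = a ^ 4 := by
    rw [hadef, ← Real.rpow_natCast (x ^ ((1:ℝ)/3)) 4, ← Real.rpow_mul hx.le]
    norm_num
  have hneg4 : x ^ (-(4 : ℝ) / 3) = u ^ 4 := by
    rw [neg_div, Real.rpow_neg hx.le, ha4, hudef, inv_pow]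
  have htu : t * u ≤ ε := by
    have := hN₀ n (le_trans (le_max_left _ _) hn)
    rwa [← hneg1]
  -- p bounds
  have hpe : p n = u ^ 3 + lam * t * u ^ 4 := by
    rw [hp n, ← hxdef, ← htdef, hneg4, ← hu3]
  have htu0 : 0 ≤ t * u := (mul_pos ht hu).le
  have habs2 : |lam * (t * u)| ≤ 1 / 2 := by
    rw [abs_mul, abs_of_pos (mul_pos ht hu)]
    calc |lam| * (t * u) ≤ |lam| * ε := mul_le_mul_of_nonneg_left htu habs
      _ ≤ 1 / 2 := hlamε
  have hlb : -(1/2) ≤ lam * (t * u) := (abs_le.mp habs2).1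
  have hub : lam * (t * u) ≤ 1/2 := (abs_le.mp habs2).2
  have hu3half : u ^ 3 ≤ 1 / 2 := by
    rw [hu3]
    have : x⁻¹ ≤ 2⁻¹ := by
      apply inv_anti₀ (by norm_num) hn2
    linarith
  have hu3pos : (0:ℝ) < u ^ 3 := pow_pos hu 3
  have hp0 : 0 ≤ p n := by
    rw [hpe]
    have h := mul_le_mul_of_nonneg_right hlb hu3pos.le
    have heq : lam * (t * u) * u ^ 3 = lam * t * u ^ 4 := by ring
    rw [heq] at h
    linarith
  have hp2 : p n ≤ 2 * u ^ 3 := by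
    rw [hpe]
    have h := mul_le_mul_of_nonneg_right hub hu3pos.le
    have heq : lam * (t * u) * u ^ 3 = lam * t * u ^ 4 := by ring
    rw [heq] at h
    linarith
  have hp1 : p n ≤ 1 := le_trans hp2 (by linarith)
  set Z : ℝ := (z : ℝ) with hZdef
  set C : ℝ := (c : ℝ) with hCdef
  set P : ℝ := p n with hPdef
  set Q : ℝ := q n z with hQdef
  have hZ0 : 0 ≤ Z := Nat.cast_nonneg z
  have hC0 : 0 ≤ C := Nat.cast_nonneg c
  have hQle : Q ≤ Z * P := by
    rw [hQdef, hq]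
    have hber := one_add_mul_le_pow (show (-2:ℝ) ≤ -P by linarith) z
    have h' : (1:ℝ) + (z:ℝ) * (-P) = 1 - Z * P := by rw [hZdef]; ring
    rw [h', show (1:ℝ) + -P = 1 - P from by ring] at hber
    linarith
  have hQge : Z * P - (Z * P) ^ 2 / 2 ≤ Q := by
    rw [hQdef, hq]
    have := aux_pow_le P hp0 hp1 z
    rw [← hZdef] at this
    linarith
  have hQ0 : 0 ≤ Q := by
    rw [hQdef, hq]
    have : (1 - P) ^ z ≤ 1 := pow_le_one₀ (by linarith) (by linarith)
    linarith
  have hQ1 : Q ≤ 1 := by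
    rw [hQdef, hq]
    have : 0 ≤ (1 - P) ^ z := pow_nonneg (by linarith) z
    linarith
  have hcube : a ^ 3 * u ^ 3 = 1 := by
    rw [← mul_pow, hau, one_pow]
  have hxP : x * P = 1 + lam * (t * u) := by
    rw [hpe, ← ha3]
    linear_combination (1 + lam * t * u) * hcube
  have hZPnn : 0 ≤ Z * P := mul_nonneg hZ0 hp0
  have hZP2 : Z * P ≤ 2 * r * t ^ 2 * u ^ 2 := by
    have h1 : Z * P ≤ (a * t ^ 2 * r) * (2 * u ^ 3) :=
      mul_le_mul hz hp2 hp0 (by positivity)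
    have heq : (a * t ^ 2 * r) * (2 * u ^ 3) = 2 * r * t ^ 2 * u ^ 2 := by
      linear_combination 2 * r * t ^ 2 * u ^ 2 * hau
    linarith
  have hZtu : Z * (t * u) ≤ r * t ^ 3 := by
    have h1 : Z * (t * u) ≤ (a * t ^ 2 * r) * (t * u) :=
      mul_le_mul_of_nonneg_right hz htu0
    have heq : (a * t ^ 2 * r) * (t * u) = r * t ^ 3 := by
      linear_combination r * t ^ 3 * hau
    linarith
  have hZs0 : 0 ≤ Z * (t * u) := mul_nonneg hZ0 htu0
  have hZl1 : Z * (lam * (t * u)) ≤ |lam| * r * t ^ 3 := by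
    have h1 := mul_le_mul_of_nonneg_left (le_abs_self lam) hZs0
    have h2 : |lam| * (Z * (t * u)) ≤ |lam| * (r * t ^ 3) :=
      mul_le_mul_of_nonneg_left hZtu habs
    linarith only [h1, h2]
  have hZl2 : -(|lam| * r * t ^ 3) ≤ Z * (lam * (t * u)) := by
    have h1 := mul_le_mul_of_nonneg_left (neg_abs_le lam) hZs0
    have h2 : |lam| * (Z * (t * u)) ≤ |lam| * (r * t ^ 3) :=
      mul_le_mul_of_nonneg_left hZtu habs
    linarith only [h1, h2]
  have hB2 : x * (Z * P) ^ 2 ≤ 4 * r ^ 2 * t ^ 3 := by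
    have h4 : (Z * P) ^ 2 ≤ (2 * r * t ^ 2 * u ^ 2) ^ 2 :=
      pow_le_pow_left₀ hZPnn hZP2 2
    have h5 : x * (Z * P) ^ 2 ≤ x * (2 * r * t ^ 2 * u ^ 2) ^ 2 :=
      mul_le_mul_of_nonneg_left h4 hx.le
    have h6 : x * (2 * r * t ^ 2 * u ^ 2) ^ 2 = 4 * r ^ 2 * t ^ 3 * (t * u) := by
      rw [← ha3]
      linear_combination 4 * r ^ 2 * t ^ 4 * u * hcube
    have h7 := mul_le_mul_of_nonneg_left (htu.trans hε1)
      (show (0:ℝ) ≤ 4 * r ^ 2 * t ^ 3 by positivity)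
    linarith only [h5, h6, h7]
  have hxQ_up : x * Q ≤ Z + |lam| * r * t ^ 3 := by
    have h1 : x * Q ≤ x * (Z * P) := mul_le_mul_of_nonneg_left hQle hx.le
    have h2 : x * (Z * P) = Z + Z * (lam * (t * u)) := by
      linear_combination Z * hxP
    linarith only [h1, h2, hZl1]
  have hxQ_lo : Z - |lam| * r * t ^ 3 - 2 * r ^ 2 * t ^ 3 ≤ x * Q := by
    have h1 : x * (Z * P - (Z * P) ^ 2 / 2) ≤ x * Q :=
      mul_le_mul_of_nonneg_left hQge hx.le
    have h2 : x * (Z * P - (Z * P) ^ 2 / 2) =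
        Z + Z * (lam * (t * u)) - x * (Z * P) ^ 2 / 2 := by
      linear_combination Z * hxP
    linarith only [h1, h2, hZl2, hB2]
  have hCQ0 : 0 ≤ C * Q := mul_nonneg hC0 hQ0
  have hCQ_up : C * Q ≤ 2 * T * r ^ 2 * t ^ 3 := by
    have h1 : C * Q ≤ C * (Z * P) := mul_le_mul_of_nonneg_left hQle hC0
    have h2 : C * (Z * P) ≤ (a ^ 2 * t * T * r) * (2 * r * t ^ 2 * u ^ 2) := by
      rw [ha2] at hc
      exact mul_le_mul hc hZP2 hZPnn (by positivity)
    have h3 : (a ^ 2 * t * T * r) * (2 * r * t ^ 2 * u ^ 2) = 2 * T * r ^ 2 * t ^ 3 := by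
      linear_combination (2 * T * r ^ 2 * t ^ 3 * (a * u + 1)) * hau
    linarith only [h1, h2, h3]
  have hta : t ≤ a := by
    have h1 := mul_le_mul_of_nonneg_right (htu.trans hε1) ha.le
    have h2 : t * u * a = t := by linear_combination t * hau
    linarith only [h1, h2]
  constructor
  · -- mean bound
    rw [hμ n z c, ← hxdef, ← hCdef, ← hQdef, abs_le, hK]
    have e : (x - C) * Q = x * Q - C * Q := by ring
    have hpos1 : (0:ℝ) ≤ (r + 1) * t ^ 3 := by positivity
    have hpos2 : (0:ℝ) ≤ (2 * r ^ 2 + 2 * T * r ^ 2 + r + 1) * t ^ 3 := by positivity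
    constructor
    · linarith only [e, hxQ_lo, hCQ_up, hpos1]
    · linarith only [e, hxQ_up, hCQ0, hpos2]
  · -- variance bound
    rw [hσ n z c, ← hxdef, ← hCdef, ← hQdef, hK]
    have hq1q : 0 ≤ Q * (1 - Q) := mul_nonneg hQ0 (by linarith only [hQ1])
    have h1 : (x - C) * Q * (1 - Q) ≤ x * (Q * (1 - Q)) := by
      have hh := mul_nonneg hC0 hq1q
      have e : (x - C) * Q * (1 - Q) = x * (Q * (1 - Q)) - C * (Q * (1 - Q)) := by ring
      linarith only [hh, e]
    have h2 : x * (Q * (1 - Q)) ≤ x * Q := by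
      have hh : 0 ≤ x * Q * Q := mul_nonneg (mul_nonneg hx.le hQ0) hQ0
      have e : x * (Q * (1 - Q)) = x * Q - x * Q * Q := by ring
      linarith only [hh, e]
    have h4 : t ^ 3 ≤ t ^ 2 * a := by
      have hh := mul_le_mul_of_nonneg_left hta (sq_nonneg t)
      have e : t ^ 2 * t = t ^ 3 := by ring
      linarith only [hh, e]
    have h5 : |lam| * r * t ^ 3 ≤ |lam| * r * (t ^ 2 * a) :=
      mul_le_mul_of_nonneg_left h4 (mul_nonneg habs hr.le)
    have hposv : (0:ℝ) ≤ (2 * r ^ 2 + 2 * T * r ^ 2 + 1) * (t ^ 2 * a) := by positivity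
    linarith only [h1, h2, hxQ_up, h5, hz, hposv]
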